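/- The projection endomorphism ϱ of O^{>0,n}_∞ defined by ϱ(φ) = Σ_{k>0} (1/k) ρ∘h_k∘h^n(φ) with ρ(φ) = Σ_{|Λ|≥0} (−1)^{|Λ|} θ^i ∧ d_Λ(∂^Λ_i ⌟ φ) annihilates total differentials: ϱ ∘ d_H = 0 on contact forms of horizontal degree n−1. -/

import Mathlib

/-!
A concrete polynomial model of the infinite jet space `J^∞Y` of a fiber bundle `Y → X`
(`dim X = n`, fiber coordinates indexed by `ι`): the ring `O⁰_∞` of functions of finite
jet order is modeled by polynomials in the coordinates `x^λ` and the jet coordinates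
`y^i_Λ` (`Λ` a symmetric multi-index, i.e. `Λ : Fin n →₀ ℕ`).
-/

open MvPolynomial

/-- Jet variables: the base coordinates `x^λ` and the jet coordinates `y^i_Λ`. -/
abbrev JetVar (n : ℕ) (ι : Type) : Type := Sum (Fin n) (ι × (Fin n →₀ ℕ))

/-- The ring `O⁰_∞` of functions of finite jet order (polynomial model). -/
abbrev JetAlg (n : ℕ) (ι : Type) : Type := MvPolynomial (JetVar n ι) ℝ

/-- The jet coordinate `y^i_Λ` as an element of `O⁰_∞`. -/
noncomputable def yco (n : ℕ) (ι : Type) (i : ι) (Λ : Fin n →₀ ℕ) : JetAlg n ι :=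
  X (Sum.inr (i, Λ))

/-- The total derivative `d_λ = ∂_λ + Σ_Λ y^i_{λ+Λ} ∂^Λ_i`. -/
noncomputable def dTot (n : ℕ) (ι : Type) (lam : Fin n) :
    Derivation ℝ (JetAlg n ι) (JetAlg n ι) :=
  mkDerivation ℝ fun v => match v with
    | Sum.inl mu => if mu = lam then 1 else 0
    | Sum.inr (i, Λ) => yco n ι i (Λ + Finsupp.single lam 1)

/-- The iterated total derivative `d_Λ = d_{λ_k} ∘ ⋯ ∘ d_{λ_1}`. -/
noncomputable def dMulti (n : ℕ) (ι : Type) (Λ : Fin n →₀ ℕ) :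
    JetAlg n ι →ₗ[ℝ] JetAlg n ι :=
  ((Finsupp.toMultiset Λ).toList.map fun lam => (dTot n ι lam).toLinearMap).foldr
    (· ∘ₗ ·) LinearMap.id

/-- One-forms of finite jet order: formal combinations `Σ φ_v d(v)` over the jet variables. -/
abbrev Forms1 (n : ℕ) (ι : Type) : Type := JetVar n ι →₀ JetAlg n ι

/-- The differential `d : O⁰_∞ → O¹_∞`. -/
noncomputable def dP (n : ℕ) (ι : Type) : Derivation ℝ (JetAlg n ι) (Forms1 n ι) :=
  mkDerivation ℝ fun v => Finsupp.single v 1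

/-- The contact one-form `θ^i_Λ = dy^i_Λ − y^i_{λ+Λ} dx^λ`. -/
noncomputable def theta (n : ℕ) (ι : Type) (i : ι) (Λ : Fin n →₀ ℕ) : Forms1 n ι :=
  Finsupp.single (Sum.inr (i, Λ)) 1 -
    ∑ lam : Fin n, Finsupp.single (Sum.inl lam) (yco n ι i (Λ + Finsupp.single lam 1))

/-- The `O⁰_∞`-module of contact one-forms, spanned by the `θ^i_Λ`. -/
noncomputable def contact (n : ℕ) (ι : Type) : Submodule (JetAlg n ι) (Forms1 n ι) :=
  Submodule.span _ (Set.range fun p : ι × (Fin n →₀ ℕ) => theta n ι p.1 p.2)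

/-- The derivation `υ = υ^λ ∂_λ + υ^i ∂_i + Σ_{|Λ|>0} υ^i_Λ ∂^Λ_i` of `O⁰_∞` with
prescribed coefficients `υ^λ = vX λ` and `υ^i_Λ = vY i Λ` (`υ^i = vY i 0`). -/
noncomputable def genDer (n : ℕ) (ι : Type) (vX : Fin n → JetAlg n ι)
    (vY : ι → (Fin n →₀ ℕ) → JetAlg n ι) : Derivation ℝ (JetAlg n ι) (JetAlg n ι) :=
  mkDerivation ℝ fun v => match v with
    | Sum.inl lam => vX lam
    | Sum.inr (i, Λ) => vY i Λ

/-- The Lie derivative of a one-form along a derivation `υ` of `O⁰_∞`: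
`L_υ(Σ a_v dv) = Σ υ(a_v) dv + a_v d(υ(v))`. -/
noncomputable def lieD (n : ℕ) (ι : Type)
    (υ : Derivation ℝ (JetAlg n ι) (JetAlg n ι)) (φ : Forms1 n ι) : Forms1 n ι :=
  φ.sum fun v a => Finsupp.single v (υ a) + a • (dP n ι (υ (X v)))

/-- One-contact `n`-horizontal forms `Σ φ_a^Λ θ^a_Λ ∧ ω` (coefficients of `θ^a_Λ ∧ ω`). -/
abbrev FormsCn (n : ℕ) (ι : Type) : Type := (ι × (Fin n →₀ ℕ)) →₀ JetAlg n ι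

/-- One-contact `(n−1)`-horizontal forms `Σ φ θ^a_Λ ∧ ω_μ` (coefficients of `θ^a_Λ ∧ ω_μ`). -/
abbrev FormsCn1 (n : ℕ) (ι : Type) : Type := (ι × (Fin n →₀ ℕ) × Fin n) →₀ JetAlg n ι

/-- The total differential `d_H φ = dx^λ ∧ d_λ φ` on one-contact `(n−1)`-horizontal forms:
`d_H(a θ^i_Λ ∧ ω_μ) = −a θ^i_{μ+Λ} ∧ ω − (d_μ a) θ^i_Λ ∧ ω`. -/
noncomputable def dHCn1 (n : ℕ) (ι : Type) (φ : FormsCn1 n ι) : FormsCn n ι :=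
  φ.sum fun v a =>
    -(Finsupp.single (v.1, v.2.1 + Finsupp.single v.2.2 1) a)
      - Finsupp.single (v.1, v.2.1) (dTot n ι v.2.2 a)

/-- The projection endomorphism `ϱ` of `O^{1,n}_∞`:
`ϱ(Σ a θ^i_Λ ∧ ω) = Σ (−1)^{|Λ|} θ^i ∧ d_Λ(a) ω`. -/
noncomputable def varrho (n : ℕ) (ι : Type) (φ : FormsCn n ι) : FormsCn n ι :=
  φ.sum fun v a =>
    Finsupp.single (v.1, (0 : Fin n →₀ ℕ))
      (((-1 : ℝ) ^ (v.2.sum fun _ k => k)) • dMulti n ι v.2 a)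

/-!
STATEMENT 4: The projection endomorphism `ϱ = Σ_{k>0} (1/k) ρ∘h_k∘h^n` with
`ρ(φ) = Σ_Λ (−1)^{|Λ|} θ^i ∧ d_Λ(∂^Λ_i⌟φ)` annihilates total differentials:
`ϱ ∘ d_H = 0` on (one-)contact forms of horizontal degree `n−1`.
-/
/-- Total derivatives commute. -/
lemma dTot_comm (n : ℕ) (ι : Type) (lam mu : Fin n) :
    Commute (dTot n ι lam).toLinearMap (dTot n ι mu).toLinearMap := by
  have h : ⁅dTot n ι lam, dTot n ι mu⁆ = 0 := by
    apply MvPolynomial.derivation_ext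
    intro v
    rw [Derivation.commutator_apply, Derivation.zero_apply]
    match v with
    | Sum.inl nu =>
        simp only [dTot, MvPolynomial.mkDerivation_X]
        split <;> split <;> simp
    | Sum.inr (i, Λ) =>
        simp only [dTot, MvPolynomial.mkDerivation_X, yco]
        rw [sub_eq_zero, add_right_comm]
  have key : ∀ p, (dTot n ι lam) ((dTot n ι mu) p) = (dTot n ι mu) ((dTot n ι lam) p) := by
    intro p
    have hp := DFunLike.congr_fun h p
    rw [Derivation.commutator_apply, Derivation.zero_apply] at hp
    exact sub_eq_zero.mp hp
  exact LinearMap.ext fun p => by simpa [Module.End.mul_apply] using key p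

lemma dMulti_eq_prod (n : ℕ) (ι : Type) (Λ : Fin n →₀ ℕ) :
    dMulti n ι Λ =
      (((Finsupp.toMultiset Λ).toList.map fun lam => (dTot n ι lam).toLinearMap)).prod := by
  rfl

/-- Key lemma: `d_{Λ + μ} = d_Λ ∘ d_μ`. -/
lemma dMulti_add_single (n : ℕ) (ι : Type) (Λ : Fin n →₀ ℕ) (mu : Fin n) :
    dMulti n ι (Λ + Finsupp.single mu 1) =
      dMulti n ι Λ ∘ₗ (dTot n ι mu).toLinearMap := by
  rw [dMulti_eq_prod, dMulti_eq_prod]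
  have hperm : (Finsupp.toMultiset (Λ + Finsupp.single mu 1)).toList.Perm
      ((Finsupp.toMultiset Λ).toList ++ [mu]) := by
    rw [← Multiset.coe_eq_coe]
    simp [Finsupp.toMultiset_add, Finsupp.toMultiset_single, ← Multiset.coe_add]
  have hperm' := hperm.map fun lam => (dTot n ι lam).toLinearMap
  rw [List.Perm.prod_eq' hperm' ?_ ]
  · simp [List.prod_append, Module.End.mul_eq_comp]
  · rw [List.pairwise_map]
    induction (Finsupp.toMultiset (Λ + Finsupp.single mu 1)).toList with
    | nil => exact List.Pairwise.nil
    | cons a l ih => exact List.Pairwise.cons (fun b _ => dTot_comm n ι a b) ih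

lemma varrho_single (n : ℕ) (ι : Type) (i : ι) (Λ : Fin n →₀ ℕ) (a : JetAlg n ι) :
    varrho n ι (Finsupp.single (i, Λ) a) =
      Finsupp.single (i, (0 : Fin n →₀ ℕ))
        (((-1 : ℝ) ^ (Λ.sum fun _ k => k)) • dMulti n ι Λ a) := by
  unfold varrho
  rw [Finsupp.sum_single_index]
  simp

lemma varrho_add (n : ℕ) (ι : Type) (φ₁ φ₂ : FormsCn n ι) :
    varrho n ι (φ₁ + φ₂) = varrho n ι φ₁ + varrho n ι φ₂ := by
  unfold varrho
  rw [Finsupp.sum_add_index' (fun _ => by simp) (fun v b₁ b₂ => by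
    simp [map_add, smul_add, Finsupp.single_add])]

lemma varrho_neg (n : ℕ) (ι : Type) (φ : FormsCn n ι) :
    varrho n ι (-φ) = -varrho n ι φ := by
  have h0 : varrho n ι 0 = 0 := by simp [varrho]
  have := varrho_add n ι φ (-φ)
  rw [add_neg_cancel, h0] at this
  exact (neg_eq_of_add_eq_zero_right this.symm).symm

lemma varrho_sub (n : ℕ) (ι : Type) (φ₁ φ₂ : FormsCn n ι) :
    varrho n ι (φ₁ - φ₂) = varrho n ι φ₁ - varrho n ι φ₂ := by
  rw [sub_eq_add_neg, varrho_add, varrho_neg, sub_eq_add_neg]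

lemma dHCn1_single (n : ℕ) (ι : Type) (v : ι × (Fin n →₀ ℕ) × Fin n) (a : JetAlg n ι) :
    dHCn1 n ι (Finsupp.single v a) =
      -(Finsupp.single (v.1, v.2.1 + Finsupp.single v.2.2 1) a)
        - Finsupp.single (v.1, v.2.1) (dTot n ι v.2.2 a) := by
  unfold dHCn1
  rw [Finsupp.sum_single_index]
  simp

lemma sum_add_single (n : ℕ) (Λ : Fin n →₀ ℕ) (mu : Fin n) :
    ((Λ + Finsupp.single mu 1).sum fun _ k => k) = (Λ.sum fun _ k => k) + 1 := by
  rw [Finsupp.sum_add_index' (fun _ => rfl) (fun _ _ _ => rfl),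
    Finsupp.sum_single_index rfl]

theorem stmt_4 (n : ℕ) (ι : Type) (ψ : FormsCn1 n ι) :
    varrho n ι (dHCn1 n ι ψ) = 0 := by
  induction ψ using Finsupp.induction with
  | zero => simp [dHCn1, varrho]
  | single_add v a ψ hv hna ih =>
      have hadd : dHCn1 n ι (Finsupp.single v a + ψ) =
          dHCn1 n ι (Finsupp.single v a) + dHCn1 n ι ψ := by
        unfold dHCn1
        rw [Finsupp.sum_add_index' (fun _ => by simp) (fun v b₁ b₂ => by
          simp [map_add, Finsupp.single_add, neg_add, sub_eq_add_neg]; abel)]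
      rw [hadd, varrho_add, ih, add_zero, dHCn1_single]
      rw [varrho_sub, varrho_neg, varrho_single, varrho_single]
      rw [dMulti_add_single, sum_add_single]
      simp only [LinearMap.comp_apply, Derivation.coeFn_coe, pow_succ]
      rw [sub_eq_zero, neg_eq_iff_eq_neg, ← Finsupp.single_neg]
      congr 1
      rw [← neg_smul]
      ring_nf
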